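/- A Banach space X is HLUR if and only if for every x ∈ S_X, the sets D[x,1/n] = {y ∈ B_X : ‖(x+y)/2‖ ≥ 1 - 1/n} converge in the Hausdorff sense to A_0(x) = ∪{S(X,x*,0) : x* ∈ J(x)}, and S(X,x*,0) is the same for all x* ∈ J(x). -/

import Mathlib

open Metric Filter Topology NormedSpace Pointwise

noncomputable section

/-- The face `S(X, f, 0) = {y ∈ B_X : f(y) = 1}` determined by a functional `f`. -/
def face (X : Type*) [NormedAddCommGroup X] [NormedSpace ℝ X] (f : X →L[ℝ] ℝ) : Set X :=
  {y | ‖y‖ ≤ 1 ∧ f y = 1}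

/-- Property (HS). -/
def HSProp (X : Type*) [NormedAddCommGroup X] [NormedSpace ℝ X] : Prop :=
  ∀ f : X →L[ℝ] ℝ, ‖f‖ = 1 → (face X f).Nonempty →
    ∀ xs : ℕ → X, (∀ n, ‖xs n‖ ≤ 1) →
      Tendsto (fun n => f (xs n)) atTop (𝓝 1) →
      Tendsto (fun n => infDist (xs n) (face X f)) atTop (𝓝 0)

/-- Property (HLUR). -/
def HLUR (X : Type*) [NormedAddCommGroup X] [NormedSpace ℝ X] : Prop :=
  ∀ x : X, ‖x‖ = 1 → ∀ xs : ℕ → X, (∀ n, ‖xs n‖ = 1) →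
    Tendsto (fun n => ‖xs n + x‖) atTop (𝓝 2) →
    ∀ f : X →L[ℝ] ℝ, ‖f‖ = 1 → f x = 1 →
      Tendsto (fun n => infDist (xs n) (face X f)) atTop (𝓝 0)

/-- Local uniform rotundity. -/
def LUR (X : Type*) [NormedAddCommGroup X] [NormedSpace ℝ X] : Prop :=
  ∀ x : X, ‖x‖ = 1 → ∀ xs : ℕ → X, (∀ n, ‖xs n‖ = 1) →
    Tendsto (fun n => ‖xs n + x‖) atTop (𝓝 2) → Tendsto xs atTop (𝓝 x)

/-- Compact local uniform rotundity. -/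
def CLUR (X : Type*) [NormedAddCommGroup X] [NormedSpace ℝ X] : Prop :=
  ∀ x : X, ‖x‖ = 1 → ∀ xs : ℕ → X, (∀ n, ‖xs n‖ = 1) →
    Tendsto (fun n => ‖xs n + x‖) atTop (𝓝 2) →
    ∃ φ : ℕ → ℕ, StrictMono φ ∧ ∃ z : X, Tendsto (xs ∘ φ) atTop (𝓝 z)

/-- Local U-convexity. -/
def LocallyUConvex (X : Type*) [NormedAddCommGroup X] [NormedSpace ℝ X] : Prop :=
  ∀ x : X, ‖x‖ = 1 → ∀ xs : ℕ → X, (∀ n, ‖xs n‖ = 1) →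
    Tendsto (fun n => ‖xs n + x‖) atTop (𝓝 2) →
    ∃ f : X →L[ℝ] ℝ, ‖f‖ = 1 ∧ f x = 1 ∧ Tendsto (fun n => f (xs n)) atTop (𝓝 1)

/-- Strong local U-convexity. -/
def StronglyLocallyUConvex (X : Type*) [NormedAddCommGroup X] [NormedSpace ℝ X] : Prop :=
  ∀ x : X, ‖x‖ = 1 → ∀ xs : ℕ → X, (∀ n, ‖xs n‖ = 1) →
    Tendsto (fun n => ‖xs n + x‖) atTop (𝓝 2) →
    ∀ f : X →L[ℝ] ℝ, ‖f‖ = 1 → f x = 1 → Tendsto (fun n => f (xs n)) atTop (𝓝 1)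

/-- Rotundity (strict convexity): every face has at most one element. -/
def Rotund (X : Type*) [NormedAddCommGroup X] [NormedSpace ℝ X] : Prop :=
  ∀ f : X →L[ℝ] ℝ, ‖f‖ = 1 → (face X f).Subsingleton

/-- Near strict convexity: every face is norm-compact. -/
def NSC (X : Type*) [NormedAddCommGroup X] [NormedSpace ℝ X] : Prop :=
  ∀ f : X →L[ℝ] ℝ, ‖f‖ = 1 → IsCompact (face X f)

/-- Kadets-Klee property. -/
def KadetsKlee (X : Type*) [NormedAddCommGroup X] [NormedSpace ℝ X] : Prop :=
  ∀ (xs : ℕ → X) (x : X),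
    (∀ f : X →L[ℝ] ℝ, Tendsto (fun n => f (xs n)) atTop (𝓝 (f x))) →
    Tendsto (fun n => ‖xs n‖) atTop (𝓝 ‖x‖) → Tendsto xs atTop (𝓝 x)

/-- Alternatively convex or smooth. -/
def ACS (X : Type*) [NormedAddCommGroup X] [NormedSpace ℝ X] : Prop :=
  ∀ x y : X, ‖x‖ = 1 → ‖y‖ = 1 → ∀ f : X →L[ℝ] ℝ, ‖f‖ = 1 →
    ‖x + y‖ = 2 → f x = 1 → f y = 1

/-- Smoothness: each unit vector has a unique norming functional. -/
def SmoothSpace (X : Type*) [NormedAddCommGroup X] [NormedSpace ℝ X] : Prop :=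
  ∀ x : X, ‖x‖ = 1 → ∃! f : X →L[ℝ] ℝ, ‖f‖ = 1 ∧ f x = 1

/-- Reflexivity of a normed space. -/
def ReflexiveSpace (X : Type*) [NormedAddCommGroup X] [NormedSpace ℝ X] : Prop :=
  Function.Surjective (inclusionInDoubleDual ℝ X)

/-- Strong rotundity: reflexive, rotund and Kadets-Klee. -/
def StronglyRotund (X : Type*) [NormedAddCommGroup X] [NormedSpace ℝ X] : Prop :=
  ReflexiveSpace X ∧ Rotund X ∧ KadetsKlee X

/-- The set `D[x, δ] = {y ∈ B_X : ‖(x+y)/2‖ ≥ 1 - δ}`. -/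
def Dset (X : Type*) [NormedAddCommGroup X] [NormedSpace ℝ X] (x : X) (δ : ℝ) : Set X :=
  {y | ‖y‖ ≤ 1 ∧ 1 - δ ≤ ‖(2 : ℝ)⁻¹ • (x + y)‖}

/-- `A₀(x)`, the union of the faces determined by the norming functionals of `x`. -/
def A0 (X : Type*) [NormedAddCommGroup X] [NormedSpace ℝ X] (x : X) : Set X :=
  {y | ∃ f : X →L[ℝ] ℝ, ‖f‖ = 1 ∧ f x = 1 ∧ y ∈ face X f}

/-- Convergence of a sequence of sets to a set in the Hausdorff sense. -/
def HausdorffTendsto (X : Type*) [NormedAddCommGroup X] [NormedSpace ℝ X]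
    (C : ℕ → Set X) (C₀ : Set X) : Prop :=
  ∀ ε > (0 : ℝ),
    (∀ᶠ n in atTop, C n ⊆ C₀ + closedBall (0 : X) ε) ∧
    (∀ᶠ n in atTop, C₀ ⊆ C n + closedBall (0 : X) ε)

section AuxLemmas

variable {X : Type*} [NormedAddCommGroup X] [NormedSpace ℝ X]

lemma isClosed_face (f : X →L[ℝ] ℝ) : IsClosed (face X f) := by
  have h : face X f = {y : X | ‖y‖ ≤ 1} ∩ f ⁻¹' {1} := rfl
  rw [h]
  exact (isClosed_le continuous_norm continuous_const).inter
    (isClosed_singleton.preimage f.continuous)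

lemma norm_eq_one_of_mem_face {f : X →L[ℝ] ℝ} (hf : ‖f‖ = 1) {y : X}
    (hy : y ∈ face X f) : ‖y‖ = 1 := by
  refine le_antisymm hy.1 ?_
  have h1 := f.le_opNorm y
  rw [hf, one_mul] at h1
  calc (1:ℝ) = f y := hy.2.symm
    _ ≤ ‖f y‖ := le_abs_self _
    _ ≤ ‖y‖ := h1

lemma norm_add_eq_two {f : X →L[ℝ] ℝ} (hf : ‖f‖ = 1) {x : X} (hfx : f x = 1)
    (hx : ‖x‖ = 1) {y : X} (hy : y ∈ face X f) : ‖x + y‖ = 2 := by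
  refine le_antisymm ?_ ?_
  · calc ‖x + y‖ ≤ ‖x‖ + ‖y‖ := norm_add_le _ _
      _ ≤ 2 := by rw [hx]; linarith [hy.1]
  · have h1 := f.le_opNorm (x + y)
    rw [hf, one_mul] at h1
    calc (2:ℝ) = f (x + y) := by rw [map_add, hfx, hy.2]; norm_num
      _ ≤ ‖f (x + y)‖ := le_abs_self _
      _ ≤ ‖x + y‖ := h1

end AuxLemmas

theorem hlur_iff_hausdorff (X : Type*) [NormedAddCommGroup X] [NormedSpace ℝ X]
    [CompleteSpace X] :
    HLUR X ↔ ∀ x : X, ‖x‖ = 1 →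
      HausdorffTendsto X (fun n : ℕ => Dset X x (1 / n)) (A0 X x) ∧
      (∀ f g : X →L[ℝ] ℝ, ‖f‖ = 1 → f x = 1 → ‖g‖ = 1 → g x = 1 →
        face X f = face X g) := by
  constructor
  · intro h x hx
    have hxne : x ≠ 0 := by
      intro h0; rw [h0, norm_zero] at hx; norm_num at hx
    have key : ∀ f g : X →L[ℝ] ℝ, ‖f‖ = 1 → f x = 1 → ‖g‖ = 1 → g x = 1 →
        face X f ⊆ face X g := by
      intro f g hf hfx hg hgx y hy
      have hy1 : ‖y‖ = 1 := norm_eq_one_of_mem_face hf hy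
      have hxy : ‖y + x‖ = 2 := by rw [add_comm]; exact norm_add_eq_two hf hfx hx hy
      have ht := h x hx (fun _ => y) (fun _ => hy1)
        (by simp only [hxy]; exact tendsto_const_nhds)
        g hg hgx
      have h0 : infDist y (face X g) = 0 := tendsto_nhds_unique tendsto_const_nhds ht
      exact ((isClosed_face g).mem_iff_infDist_zero ⟨x, hx.le, hgx⟩).2 h0
    have hfaceeq : ∀ f g : X →L[ℝ] ℝ, ‖f‖ = 1 → f x = 1 → ‖g‖ = 1 → g x = 1 →
        face X f = face X g := fun f g hf hfx hg hgx =>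
      Set.Subset.antisymm (key f g hf hfx hg hgx) (key g f hg hgx hf hfx)
    refine ⟨fun ε hε => ⟨?_, ?_⟩, hfaceeq⟩
    · -- upper inclusion: D[x,1/n] ⊆ A0 + εB eventually
      obtain ⟨f, hf, hfx⟩ := exists_dual_vector ℝ x (norm_ne_zero_iff.mpr hxne)
      rw [hx] at hfx
      norm_cast at hfx
      classical
      by_contra hcon
      rw [Filter.not_eventually] at hcon
      obtain ⟨φ, hφ, hP⟩ := Filter.extraction_of_frequently_atTop hcon
      choose y hyD hyA using fun k => Set.not_subset.mp (hP k)
      have hlow : ∀ k, 2 - 2 * (1 / (φ k : ℝ)) ≤ ‖x + y k‖ := by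
        intro k
        have h2 := (hyD k).2
        rw [norm_smul] at h2
        have h3 : ‖((2:ℝ)⁻¹)‖ = 2⁻¹ := by norm_num
        rw [h3] at h2
        nlinarith [h2]
      have hup : ∀ k, ‖x + y k‖ ≤ 2 := by
        intro k
        calc ‖x + y k‖ ≤ ‖x‖ + ‖y k‖ := norm_add_le _ _
          _ ≤ 2 := by rw [hx]; linarith [(hyD k).1]
      have hinv : Tendsto (fun k => (1:ℝ) / ((φ k : ℕ) : ℝ)) atTop (𝓝 0) :=
        tendsto_one_div_atTop_nhds_zero_nat.comp hφ.tendsto_atTop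
      have hxy2 : Tendsto (fun k => ‖x + y k‖) atTop (𝓝 2) := by
        refine tendsto_of_tendsto_of_tendsto_of_le_of_le
          (g := fun k => 2 - 2 * (1 / ((φ k : ℕ) : ℝ))) (h := fun _ => (2:ℝ))
          ?_ tendsto_const_nhds hlow hup
        have h4 := (tendsto_const_nhds : Tendsto (fun _ : ℕ => (2:ℝ)) atTop (𝓝 2)).sub
          (hinv.const_mul 2)
        simpa using h4
      have hyn : Tendsto (fun k => ‖y k‖) atTop (𝓝 1) := by
        refine tendsto_of_tendsto_of_tendsto_of_le_of_le
          (g := fun k => 1 - 2 * (1 / ((φ k : ℕ) : ℝ))) (h := fun _ => (1:ℝ))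
          ?_ tendsto_const_nhds ?_ (fun k => (hyD k).1)
        · have h4 := (tendsto_const_nhds : Tendsto (fun _ : ℕ => (1:ℝ)) atTop (𝓝 1)).sub
            (hinv.const_mul 2)
          simpa using h4
        · intro k
          have h1 : ‖x + y k‖ - ‖x‖ ≤ ‖y k‖ := by
            have := norm_add_le x (y k); linarith
          rw [hx] at h1
          linarith [hlow k]
      set z : ℕ → X := fun k => if h : y k = 0 then x else ‖y k‖⁻¹ • y k with hzdef
      have hz1 : ∀ k, ‖z k‖ = 1 := by
        intro k
        by_cases hk : y k = 0
        · simp [hzdef, hk, hx]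
        · have hc : (0:ℝ) < ‖y k‖ := norm_pos_iff.mpr hk
          simp only [hzdef, dif_neg hk, norm_smul, norm_inv, norm_norm]
          field_simp
      have hzy : ∀ k, ‖z k - y k‖ = |1 - ‖y k‖| := by
        intro k
        by_cases hk : y k = 0
        · simp [hzdef, hk, hx]
        · have hc : (0:ℝ) < ‖y k‖ := norm_pos_iff.mpr hk
          simp only [hzdef, dif_neg hk]
          have heq : ‖y k‖⁻¹ • y k - y k = (‖y k‖⁻¹ - 1) • y k := by
            rw [sub_smul, one_smul]
          rw [heq, norm_smul, Real.norm_eq_abs]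
          rw [← abs_of_pos hc, ← abs_mul]
          congr 1
          field_simp
          rw [abs_of_pos hc]; ring
      have hzyt : Tendsto (fun k => ‖z k - y k‖) atTop (𝓝 0) := by
        simp_rw [hzy]
        have h1 : Tendsto (fun k => 1 - ‖y k‖) atTop (𝓝 0) := by
          have h4 := (tendsto_const_nhds : Tendsto (fun _ : ℕ => (1:ℝ)) atTop (𝓝 1)).sub hyn
          simpa using h4
        simpa using h1.abs
      have hxz : Tendsto (fun k => ‖z k + x‖) atTop (𝓝 2) := by
        have hdiff : Tendsto (fun k => ‖z k + x‖ - ‖x + y k‖) atTop (𝓝 0) := by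
          refine squeeze_zero_norm (fun k => ?_) hzyt
          calc ‖‖z k + x‖ - ‖x + y k‖‖ ≤ ‖(z k + x) - (x + y k)‖ :=
                abs_norm_sub_norm_le _ _
            _ = ‖z k - y k‖ := by congr 1; abel
        have hsum := hxy2.add hdiff
        have heq : (fun k => ‖x + y k‖ + (‖z k + x‖ - ‖x + y k‖)) =
            fun k => ‖z k + x‖ := by funext k; ring
        rw [heq] at hsum
        simpa using hsum
      have hd := h x hx z hz1 hxz f hf hfx
      have hA0ne : (A0 X x).Nonempty := ⟨x, f, hf, hfx, hx.le, hfx⟩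
      have hεle : ∀ k, ¬ infDist (y k) (A0 X x) < ε := by
        intro k hlt
        obtain ⟨a, ha, hda⟩ := (infDist_lt_iff hA0ne).mp hlt
        refine hyA k (Set.mem_add.mpr ⟨a, ha, y k - a, ?_, by abel⟩)
        rw [mem_closedBall_zero_iff]
        rw [dist_eq_norm] at hda
        exact hda.le
      have hfsub : face X f ⊆ A0 X x := fun a ha => ⟨f, hf, hfx, ha⟩
      have hle2 : ∀ k, infDist (y k) (A0 X x) ≤ infDist (z k) (face X f) + ‖z k - y k‖ := by
        intro k
        calc infDist (y k) (A0 X x) ≤ infDist (y k) (face X f) :=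
              infDist_le_infDist_of_subset hfsub ⟨x, hx.le, hfx⟩
          _ ≤ infDist (z k) (face X f) + dist (y k) (z k) := infDist_le_infDist_add_dist
          _ = infDist (z k) (face X f) + ‖z k - y k‖ := by
              rw [dist_eq_norm, norm_sub_rev]
      have hsum0 : Tendsto (fun k => infDist (z k) (face X f) + ‖z k - y k‖) atTop (𝓝 0) := by
        have := hd.add hzyt
        simpa using this
      obtain ⟨k, hk⟩ := (hsum0.eventually (gt_mem_nhds hε)).exists
      exact hεle k (lt_of_le_of_lt (hle2 k) hk)
    · -- lower inclusion: A0 ⊆ D[x,1/n] + εB for every n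
      filter_upwards with n a ha
      obtain ⟨g, hg, hgx, hag⟩ := ha
      refine Set.mem_add.mpr ⟨a, ⟨hag.1, ?_⟩, 0, by simp [hε.le], by simp⟩
      have hval : g ((2:ℝ)⁻¹ • (x + a)) = 1 := by
        rw [map_smul, map_add, hgx, hag.2]
        norm_num
      have h1 : (1:ℝ) ≤ ‖(2:ℝ)⁻¹ • (x + a)‖ := by
        calc (1:ℝ) = g ((2:ℝ)⁻¹ • (x + a)) := hval.symm
          _ ≤ ‖g ((2:ℝ)⁻¹ • (x + a))‖ := le_abs_self _
          _ ≤ ‖g‖ * ‖(2:ℝ)⁻¹ • (x + a)‖ := g.le_opNorm _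
          _ = ‖(2:ℝ)⁻¹ • (x + a)‖ := by rw [hg, one_mul]
      have h1n : (0:ℝ) ≤ 1 / (n : ℝ) := by positivity
      linarith
  · intro h x hx xs hxs hlim f hf hfx
    rw [Metric.tendsto_atTop]
    intro ε hε
    obtain ⟨Hconv, hface⟩ := h x hx
    obtain ⟨N₀, hN₀⟩ := eventually_atTop.mp ((Hconv (ε/2) (by linarith)).1)
    set N : ℕ := max N₀ 1 with hNdef
    have hDN : Dset X x (1 / (N:ℝ)) ⊆ A0 X x + closedBall (0:X) (ε/2) :=
      hN₀ N (le_max_left _ _)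
    have hNpos : (0:ℝ) < (N : ℝ) :=
      Nat.cast_pos.mpr (lt_of_lt_of_le one_pos (le_max_right _ _))
    have hNinv : (0:ℝ) < 1 / (N : ℝ) := by positivity
    have hev : ∀ᶠ m in atTop, 2 - 2 * (1 / (N:ℝ)) < ‖xs m + x‖ :=
      hlim.eventually (eventually_gt_nhds (by linarith))
    obtain ⟨M, hM⟩ := eventually_atTop.mp hev
    refine ⟨M, fun m hm => ?_⟩
    have hxmD : xs m ∈ Dset X x (1 / (N:ℝ)) := by
      refine ⟨(hxs m).le, ?_⟩
      rw [norm_smul]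
      have h3 : ‖((2:ℝ)⁻¹)‖ = 2⁻¹ := by norm_num
      rw [h3]
      have := hM m hm
      rw [add_comm (xs m) x] at this
      nlinarith [this]
    obtain ⟨a, ha, b, hb, hab⟩ := Set.mem_add.mp (hDN hxmD)
    obtain ⟨g, hg, hgx, hag⟩ := ha
    have haf : a ∈ face X f := by
      rw [← hface g f hg hgx hf hfx]
      exact hag
    have hdist : infDist (xs m) (face X f) ≤ ε / 2 := by
      calc infDist (xs m) (face X f) ≤ dist (xs m) a := infDist_le_dist_of_mem haf
        _ = ‖b‖ := by rw [dist_eq_norm, ← hab]; congr 1; abel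
        _ ≤ ε / 2 := by rwa [mem_closedBall_zero_iff] at hb
    rw [Real.dist_eq, sub_zero, abs_of_nonneg infDist_nonneg]
    linarith
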